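/- Let H, ρ, F be as in the twist map setting, and assume additionally that all second partial derivatives of H are bounded in absolute value by some M > 0. Let u : ℝ → ℝ be C¹ with u(x + 1) = u(x), let c ∈ ℝ, and suppose the graph {(x, c + u'(x)) : x ∈ ℝ} is invariant under F. Suppose moreover there are integers p and q ≥ 1 such that F^q(x, c + u'(x)) = (x + p, c + u'(x)) for all x ∈ ℝ. Fix x₀ ∈ ℝ and let x_k := π₁(F^k(x₀, c + u'(x₀))) for 0 ≤ k ≤ q. Then the orbit segment minimizes the action among all paths with the same endpoints: for every finite sequence y₀, y₁, …, y_q ∈ ℝ with y₀ = x₀ and y_q = x₀ + p, one has Σ_{k=0}^{q-1} H(x_k, x_{k+1}) ≤ Σ_{k=0}^{q-1} H(y_k, y_{k+1}). -/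

import Mathlib

open Real

/-- Partial derivative of `H` in the first variable. -/
noncomputable def D1 (H : ℝ → ℝ → ℝ) (x x' : ℝ) : ℝ := deriv (fun t => H t x') x

/-- Partial derivative of `H` in the second variable. -/
noncomputable def D2 (H : ℝ → ℝ → ℝ) (x x' : ℝ) : ℝ := deriv (fun t => H x t) x'

/-- Mixed second partial derivative `∂₁₂H`. -/
noncomputable def D12 (H : ℝ → ℝ → ℝ) (x x' : ℝ) : ℝ := deriv (fun t => D1 H x t) x'

/-- Second partial derivative `∂₁₁H`. -/
noncomputable def D11 (H : ℝ → ℝ → ℝ) (x x' : ℝ) : ℝ := deriv (fun t => D1 H t x') x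

/-- Mixed second partial derivative `∂₂₁H`. -/
noncomputable def D21 (H : ℝ → ℝ → ℝ) (x x' : ℝ) : ℝ := deriv (fun t => D2 H t x') x

/-- Second partial derivative `∂₂₂H`. -/
noncomputable def D22 (H : ℝ → ℝ → ℝ) (x x' : ℝ) : ℝ := deriv (fun t => D2 H x t) x'

section aux
variable {H : ℝ → ℝ → ℝ}

lemma hasDerivAt_fst (hH : ContDiff ℝ 2 (Function.uncurry H)) (x x' : ℝ) :
    HasDerivAt (fun t => H t x') (fderiv ℝ (Function.uncurry H) (x, x') (1, 0)) x := by
  have hd : HasFDerivAt (Function.uncurry H) (fderiv ℝ (Function.uncurry H) (x, x')) (x, x') :=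
    ((hH.differentiable (by norm_num)) (x, x')).hasFDerivAt
  have h1 : HasDerivAt (fun t : ℝ => (t, x')) ((1:ℝ), (0:ℝ)) x :=
    HasDerivAt.prodMk (hasDerivAt_id x) (hasDerivAt_const x x')
  exact hd.comp_hasDerivAt x h1

lemma hasDerivAt_snd (hH : ContDiff ℝ 2 (Function.uncurry H)) (x x' : ℝ) :
    HasDerivAt (fun t => H x t) (fderiv ℝ (Function.uncurry H) (x, x') (0, 1)) x' := by
  have hd : HasFDerivAt (Function.uncurry H) (fderiv ℝ (Function.uncurry H) (x, x')) (x, x') :=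
    ((hH.differentiable (by norm_num)) (x, x')).hasFDerivAt
  have h1 : HasDerivAt (fun t : ℝ => (x, t)) ((0:ℝ), (1:ℝ)) x' :=
    HasDerivAt.prodMk (hasDerivAt_const x' x) (hasDerivAt_id x')
  exact hd.comp_hasDerivAt x' h1

lemma D1_eq (hH : ContDiff ℝ 2 (Function.uncurry H)) (x x' : ℝ) :
    D1 H x x' = fderiv ℝ (Function.uncurry H) (x, x') (1, 0) :=
  (hasDerivAt_fst hH x x').deriv

lemma D2_eq (hH : ContDiff ℝ 2 (Function.uncurry H)) (x x' : ℝ) :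
    D2 H x x' = fderiv ℝ (Function.uncurry H) (x, x') (0, 1) :=
  (hasDerivAt_snd hH x x').deriv

lemma hf'C1 (hH : ContDiff ℝ 2 (Function.uncurry H)) :
    ContDiff ℝ 1 (fderiv ℝ (Function.uncurry H)) :=
  hH.fderiv_right (by norm_num)

lemma hasDerivAt_partial_snd (hH : ContDiff ℝ 2 (Function.uncurry H)) (x x' : ℝ) (v : ℝ × ℝ) :
    HasDerivAt (fun t => fderiv ℝ (Function.uncurry H) (x, t) v)
      (fderiv ℝ (fderiv ℝ (Function.uncurry H)) (x, x') (0, 1) v) x' := by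
  have hd := (((hf'C1 hH).differentiable one_ne_zero) (x, x')).hasFDerivAt
  have h1 : HasDerivAt (fun t : ℝ => (x, t)) ((0:ℝ), (1:ℝ)) x' :=
    HasDerivAt.prodMk (hasDerivAt_const x' x) (hasDerivAt_id x')
  have h2 := hd.comp_hasDerivAt x' h1
  simpa using h2.clm_apply (hasDerivAt_const x' v)

lemma hasDerivAt_partial_fst (hH : ContDiff ℝ 2 (Function.uncurry H)) (x x' : ℝ) (v : ℝ × ℝ) :
    HasDerivAt (fun t => fderiv ℝ (Function.uncurry H) (t, x') v)
      (fderiv ℝ (fderiv ℝ (Function.uncurry H)) (x, x') (1, 0) v) x := by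
  have hd := (((hf'C1 hH).differentiable one_ne_zero) (x, x')).hasFDerivAt
  have h1 : HasDerivAt (fun t : ℝ => (t, x')) ((1:ℝ), (0:ℝ)) x :=
    HasDerivAt.prodMk (hasDerivAt_id x) (hasDerivAt_const x x')
  have h2 := hd.comp_hasDerivAt x h1
  simpa using h2.clm_apply (hasDerivAt_const x v)

lemma D12_eq (hH : ContDiff ℝ 2 (Function.uncurry H)) (x x' : ℝ) :
    D12 H x x' = fderiv ℝ (fderiv ℝ (Function.uncurry H)) (x, x') (0, 1) (1, 0) := by
  have : (fun t => D1 H x t) = fun t => fderiv ℝ (Function.uncurry H) (x, t) (1, 0) :=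
    funext fun t => D1_eq hH x t
  rw [D12, this]
  exact (hasDerivAt_partial_snd hH x x' (1, 0)).deriv

lemma D21_eq (hH : ContDiff ℝ 2 (Function.uncurry H)) (x x' : ℝ) :
    D21 H x x' = fderiv ℝ (fderiv ℝ (Function.uncurry H)) (x, x') (1, 0) (0, 1) := by
  have : (fun t => D2 H t x') = fun t => fderiv ℝ (Function.uncurry H) (t, x') (0, 1) :=
    funext fun t => D2_eq hH t x'
  rw [D21, this]
  exact (hasDerivAt_partial_fst hH x x' (0, 1)).deriv

lemma D21_eq_D12 (hH : ContDiff ℝ 2 (Function.uncurry H)) (x x' : ℝ) :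
    D21 H x x' = D12 H x x' := by
  rw [D12_eq hH, D21_eq hH]
  exact second_derivative_symmetric
    (fun y => ((hH.differentiable (by norm_num)) y).hasFDerivAt)
    ((((hf'C1 hH).differentiable one_ne_zero) (x, x')).hasFDerivAt) _ _

lemma hasDerivAt_D2_fst (hH : ContDiff ℝ 2 (Function.uncurry H)) (x x' : ℝ) :
    HasDerivAt (fun t => D2 H t x') (D21 H x x') x := by
  have : (fun t => D2 H t x') = fun t => fderiv ℝ (Function.uncurry H) (t, x') (0, 1) :=
    funext fun t => D2_eq hH t x'
  rw [this, D21_eq hH]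
  exact hasDerivAt_partial_fst hH x x' (0, 1)

lemma hasDerivAt_D1_fst (hH : ContDiff ℝ 2 (Function.uncurry H)) (x x' : ℝ) :
    HasDerivAt (fun t => D1 H t x') (D11 H x x') x := by
  have h : (fun t => D1 H t x') = fun t => fderiv ℝ (Function.uncurry H) (t, x') (1, 0) :=
    funext fun t => D1_eq hH t x'
  have h2 := hasDerivAt_partial_fst hH (H := H) x x' (1, 0)
  rw [h]
  convert h2 using 1
  rw [D11, h]
  exact h2.deriv

lemma continuous_D2 (hH : ContDiff ℝ 2 (Function.uncurry H)) :
    Continuous (fun p : ℝ × ℝ => D2 H p.1 p.2) := by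
  have : (fun p : ℝ × ℝ => D2 H p.1 p.2)
      = fun p : ℝ × ℝ => fderiv ℝ (Function.uncurry H) p (0, 1) := by
    funext p; exact D2_eq hH p.1 p.2
  rw [this]
  exact ((hf'C1 hH).continuous).clm_apply continuous_const

lemma continuous_D1 (hH : ContDiff ℝ 2 (Function.uncurry H)) :
    Continuous (fun p : ℝ × ℝ => D1 H p.1 p.2) := by
  have : (fun p : ℝ × ℝ => D1 H p.1 p.2)
      = fun p : ℝ × ℝ => fderiv ℝ (Function.uncurry H) p (1, 0) := by
    funext p; exact D1_eq hH p.1 p.2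
  rw [this]
  exact ((hf'C1 hH).continuous).clm_apply continuous_const

lemma D2_per (hper : ∀ x x', H (x + 1) (x' + 1) = H x x') (x x' : ℝ) :
    D2 H (x + 1) (x' + 1) = D2 H x x' := by
  have h1 : (fun t => H (x + 1) t) = fun t => H x (t - 1) := by
    funext t
    have h2 := hper x (t - 1)
    have h3 : t - 1 + 1 = t := by ring
    rwa [h3] at h2
  have h4 : x' + 1 - 1 = x' := by ring
  rw [D2, h1, deriv_comp_sub_const, h4, D2]

end aux

lemma bounded_of_periodic_continuous {f : ℝ → ℝ} (hf : Continuous f)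
    (hp : ∀ x, f (x + 1) = f x) : ∃ C, ∀ x, |f x| ≤ C := by
  obtain ⟨C, hC⟩ := (isCompact_Icc (a := (0:ℝ)) (b := 1)).exists_bound_of_continuousOn
    hf.continuousOn
  refine ⟨C, fun x => ?_⟩
  have hper : Function.Periodic f 1 := hp
  have h1 : f (Int.fract x) = f x := by
    rw [Int.fract]
    have := hper.sub_int_mul_eq (x := x) (n := ⌊x⌋)
    rwa [mul_one] at this
  rw [← h1]
  simpa using hC (Int.fract x) ⟨Int.fract_nonneg x, (Int.fract_lt_one x).le⟩

lemma deriv_periodic {u : ℝ → ℝ} (hp : ∀ x, u (x + 1) = u x) (x : ℝ) :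
    deriv u (x + 1) = deriv u x := by
  have h : (fun t => u (t + 1)) = u := funext hp
  have := deriv_comp_add_const (f := u) (a := 1) (x := x)
  rw [h] at this
  exact this.symm

lemma slope_le_of_deriv_le {f g : ℝ → ℝ} {ρ : ℝ}
    (hf : ∀ t, HasDerivAt f (g t) t) (hg : ∀ t, g t ≤ -ρ) {a b : ℝ} (hab : a ≤ b) :
    f b - f a ≤ -ρ * (b - a) := by
  have hF : ∀ t, HasDerivAt (fun t => f t + ρ * t) (g t + ρ) t := fun t => by
    exact ((hf t).add ((hasDerivAt_id t).const_mul ρ)).congr_deriv (by ring)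
  have hanti : AntitoneOn (fun t => f t + ρ * t) (Set.Icc a b) := by
    apply antitoneOn_of_deriv_nonpos (convex_Icc a b)
    · exact fun t _ => ((hF t).continuousAt).continuousWithinAt
    · exact fun t _ => ((hF t).differentiableAt).differentiableWithinAt
    · intro t _
      rw [(hF t).deriv]
      have := hg t; linarith
  have := hanti (Set.left_mem_Icc.2 hab) (Set.right_mem_Icc.2 hab) hab
  simp only at this
  linarith

lemma abs_sub_le_of_hasDerivAt_le {f g : ℝ → ℝ} {C : ℝ} (a b : ℝ)
    (hf : ∀ t ∈ Set.uIcc a b, HasDerivAt f (g t) t)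
    (hg : ∀ t ∈ Set.uIcc a b, |g t| ≤ C) : |f b - f a| ≤ C * |b - a| := by
  rcases le_total a b with hab | hab
  · have h1 : ∀ t ∈ Set.Icc a b, HasDerivWithinAt f (g t) (Set.Icc a b) t := by
      intro t ht
      exact (hf t (by rwa [Set.uIcc_of_le hab])).hasDerivWithinAt
    have h2 : ∀ t ∈ Set.Ico a b, ‖g t‖ ≤ C := by
      intro t ht
      exact hg t (by rw [Set.uIcc_of_le hab]; exact Set.Ico_subset_Icc_self ht)
    have := norm_image_sub_le_of_norm_deriv_le_segment' h1 h2 b (Set.right_mem_Icc.2 hab)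
    rw [Real.norm_eq_abs] at this
    calc |f b - f a| ≤ C * (b - a) := this
      _ ≤ C * |b - a| := by rw [abs_of_nonneg (sub_nonneg.2 hab)]
  · have h1 : ∀ t ∈ Set.Icc b a, HasDerivWithinAt f (g t) (Set.Icc b a) t := by
      intro t ht
      exact (hf t (by rwa [Set.uIcc_of_ge hab])).hasDerivWithinAt
    have h2 : ∀ t ∈ Set.Ico b a, ‖g t‖ ≤ C := by
      intro t ht
      exact hg t (by rw [Set.uIcc_of_ge hab]; exact Set.Ico_subset_Icc_self ht)
    have := norm_image_sub_le_of_norm_deriv_le_segment' h1 h2 a (Set.right_mem_Icc.2 hab)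
    rw [Real.norm_eq_abs, abs_sub_comm] at this
    calc |f b - f a| ≤ C * (a - b) := this
      _ ≤ C * |b - a| := by rw [abs_sub_comm, abs_of_nonneg (sub_nonneg.2 hab)]

lemma abs_sub_le_of_mem_uIcc {s s' t : ℝ} (ht : t ∈ Set.uIcc s s') : |t - s| ≤ |s' - s| := by
  rcases le_total s s' with h | h
  · rw [Set.uIcc_of_le h] at ht
    rw [abs_of_nonneg (sub_nonneg.2 ht.1), abs_of_nonneg (sub_nonneg.2 h)]
    linarith [ht.2]
  · rw [Set.uIcc_of_ge h] at ht
    rw [abs_of_nonpos (sub_nonpos.2 ht.2), abs_of_nonpos (sub_nonpos.2 h)]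
    linarith [ht.1]

/-- The graph height function. -/
noncomputable def Vv (u : ℝ → ℝ) (c : ℝ) (t : ℝ) : ℝ := c + deriv u t

/-- The circle map induced on the invariant graph. -/
noncomputable def Gg (F : ℝ × ℝ → ℝ × ℝ) (u : ℝ → ℝ) (c : ℝ) (a : ℝ) : ℝ :=
  (F (a, Vv u c a)).1

/-- The modified (tilted) generating function. -/
noncomputable def Hh (H : ℝ → ℝ → ℝ) (u : ℝ → ℝ) (c : ℝ) (a b : ℝ) : ℝ :=
  H a b + u a - u b + c * (a - b)

/-- The value of the modified generating function along the graph. -/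
noncomputable def Mm (H : ℝ → ℝ → ℝ) (F : ℝ × ℝ → ℝ × ℝ) (u : ℝ → ℝ) (c : ℝ) (a : ℝ) : ℝ :=
  Hh H u c a (Gg F u c a)

/-- Orbits on a `(p, q)`-periodic invariant graph minimize the action among all paths with
the same endpoints: if `F^q(x, c + u'(x)) = (x + p, c + u'(x))` for all `x`, and
`x_k = π₁F^k(x₀, c + u'(x₀))`, then for every sequence `y₀, …, y_q` with `y₀ = x₀` and
`y_q = x₀ + p`, the action `Σ_{k<q} H(x_k, x_{k+1})` is at most `Σ_{k<q} H(y_k, y_{k+1})`. -/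
theorem stmt14 (H : ℝ → ℝ → ℝ) (ρ M : ℝ) (F : ℝ × ℝ → ℝ × ℝ)
    (hH : ContDiff ℝ 2 (Function.uncurry H))
    (hper : ∀ x x', H (x + 1) (x' + 1) = H x x')
    (hρ : 0 < ρ) (htwist : ∀ x x', D12 H x x' ≤ -ρ)
    (hM : 0 < M)
    (hbound : ∀ x x', |D11 H x x'| ≤ M ∧ |D12 H x x'| ≤ M ∧ |D21 H x x'| ≤ M ∧
      |D22 H x x'| ≤ M)
    (hFbij : Function.Bijective F)
    (hFdef : ∀ x r x' r', F (x, r) = (x', r') ↔ (r = -D1 H x x' ∧ r' = D2 H x x'))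
    (u : ℝ → ℝ) (hu : ContDiff ℝ 1 u) (huper : ∀ x, u (x + 1) = u x) (c : ℝ)
    (hinv : Set.BijOn F {p : ℝ × ℝ | p.2 = c + deriv u p.1}
      {p : ℝ × ℝ | p.2 = c + deriv u p.1})
    (p : ℤ) (q : ℕ) (hq : 1 ≤ q)
    (hperiodic : ∀ x : ℝ, F^[q] (x, c + deriv u x) = (x + p, c + deriv u x))
    (x₀ : ℝ) (x : ℕ → ℝ) (hx : ∀ k, x k = (F^[k] (x₀, c + deriv u x₀)).1) :
    ∀ y : ℕ → ℝ, y 0 = x₀ → y q = x₀ + p →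
      ∑ k ∈ Finset.range q, H (x k) (x (k + 1)) ≤
        ∑ k ∈ Finset.range q, H (y k) (y (k + 1)) := by
  intro y hy0 hyq
  have hudiff : Differentiable ℝ u := hu.differentiable one_ne_zero
  have hu'cont : Continuous (deriv u) := hu.continuous_deriv le_rfl
  have hu'per : ∀ t, deriv u (t + 1) = deriv u t := deriv_periodic huper
  have hvper : ∀ t, Vv u c (t + 1) = Vv u c t := fun t => by
    simp [Vv, hu'per t]
  have hvcont : Continuous (Vv u c) := continuous_const.add hu'cont
  -- the graph map
  have hgraph : ∀ a, F (a, Vv u c a) = (Gg F u c a, Vv u c (Gg F u c a)) := by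
    intro a
    have h1 : F (a, Vv u c a) ∈ {p : ℝ × ℝ | p.2 = c + deriv u p.1} := hinv.mapsTo rfl
    have h2 : (F (a, Vv u c a)).2 = Vv u c ((F (a, Vv u c a)).1) := h1
    exact Prod.ext rfl h2
  have hkey : ∀ a, Vv u c a = -D1 H a (Gg F u c a) ∧
      Vv u c (Gg F u c a) = D2 H a (Gg F u c a) := fun a =>
    (hFdef a (Vv u c a) (Gg F u c a) (Vv u c (Gg F u c a))).1 (hgraph a)
  have hpre : ∀ z : ℝ × ℝ, F z ∈ {p : ℝ × ℝ | p.2 = c + deriv u p.1} →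
      z ∈ {p : ℝ × ℝ | p.2 = c + deriv u p.1} := by
    intro z hz
    obtain ⟨w, hwG, hwz⟩ := hinv.surjOn hz
    rwa [← hFbij.injective hwz]
  -- unique zero of φ a b := D2 H a b - Vv u c b
  have hφzero : ∀ a b, D2 H a b - Vv u c b = 0 → b = Gg F u c a := by
    intro a b h0
    have hD2 : D2 H a b = Vv u c b := by linarith
    have hF1 : F (a, -D1 H a b) = (b, Vv u c b) := (hFdef a _ b (Vv u c b)).2 ⟨rfl, hD2.symm⟩
    have hmem : (a, -D1 H a b) ∈ {p : ℝ × ℝ | p.2 = c + deriv u p.1} :=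
      hpre _ (by rw [hF1]; exact rfl)
    have h3 : -D1 H a b = Vv u c a := hmem
    rw [h3] at hF1
    have h4 := (hgraph a).symm.trans hF1
    exact (congrArg Prod.fst h4).symm
  have hφg : ∀ a, D2 H a (Gg F u c a) - Vv u c (Gg F u c a) = 0 := fun a => by
    rw [(hkey a).2]; ring
  -- bounds on the diagonal and on v
  obtain ⟨C₁, hC₁⟩ : ∃ C, ∀ t, |D2 H t t| ≤ C := by
    apply bounded_of_periodic_continuous
    · exact (continuous_D2 hH).comp (continuous_id.prodMk continuous_id)
    · intro t; exact D2_per hper t t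
  obtain ⟨C₂, hC₂⟩ : ∃ C, ∀ t, |Vv u c t| ≤ C :=
    bounded_of_periodic_continuous hvcont hvper
  have hC₁0 : 0 ≤ C₁ := le_trans (abs_nonneg _) (hC₁ 0)
  have hC₂0 : 0 ≤ C₂ := le_trans (abs_nonneg _) (hC₂ 0)
  -- slope estimate from the twist condition
  have hslope : ∀ b s t, s ≤ t → D2 H t b - D2 H s b ≤ -ρ * (t - s) := by
    intro b s t hst
    exact slope_le_of_deriv_le (g := fun r => D21 H r b)
      (fun r => hasDerivAt_D2_fst hH r b)
      (fun r => by show D21 H r b ≤ -ρ; rw [D21_eq_D12 hH]; exact htwist r b) hst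
  have hφlower : ∀ a b, a ≤ b → ρ * (b - a) - C₁ - C₂ ≤ D2 H a b - Vv u c b := by
    intro a b hab
    have h1 := hslope b a b hab
    have h2 := (abs_le.1 (hC₁ b)).1
    have h3 := (abs_le.1 (hC₂ b)).2
    nlinarith
  have hφupper : ∀ a b, b ≤ a → D2 H a b - Vv u c b ≤ C₁ + C₂ - ρ * (a - b) := by
    intro a b hba
    have h1 := hslope b b a hba
    have h2 := (abs_le.1 (hC₁ b)).2
    have h3 := (abs_le.1 (hC₂ b)).1
    nlinarith
  have hφcont : ∀ a, Continuous (fun b => D2 H a b - Vv u c b) := by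
    intro a
    exact (((continuous_D2 hH).comp (continuous_const.prodMk continuous_id))).sub hvcont
  -- sign of φ
  have hφpos : ∀ a b, Gg F u c a ≤ b → 0 ≤ D2 H a b - Vv u c b := by
    intro a b hb
    rcases eq_or_lt_of_le hb with he | hlt
    · rw [← he, hφg a]
    by_contra hneg
    push_neg at hneg
    have hquot : 0 ≤ (C₁ + C₂ + 1) / ρ := by positivity
    have hbB : b ≤ max b (a + (C₁ + C₂ + 1) / ρ) := le_max_left _ _
    have haB : a ≤ max b (a + (C₁ + C₂ + 1) / ρ) :=
      le_trans (by linarith) (le_max_right _ _)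
    have hφB : 0 < D2 H a (max b (a + (C₁ + C₂ + 1) / ρ))
        - Vv u c (max b (a + (C₁ + C₂ + 1) / ρ)) := by
      have h5 := hφlower a _ haB
      have h6 : (C₁ + C₂ + 1) / ρ ≤ max b (a + (C₁ + C₂ + 1) / ρ) - a := by
        have := le_max_right b (a + (C₁ + C₂ + 1) / ρ); linarith
      have h7 : C₁ + C₂ + 1 ≤ ρ * (max b (a + (C₁ + C₂ + 1) / ρ) - a) := by
        rw [mul_comm]
        exact (div_le_iff₀ hρ).1 h6
      linarith
    obtain ⟨z, hz, hz0⟩ := intermediate_value_Icc hbB ((hφcont a).continuousOn)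
      (Set.mem_Icc.2 ⟨hneg.le, hφB.le⟩)
    have hzg := hφzero a z hz0
    have := hz.1
    rw [hzg] at this
    linarith
  have hφneg : ∀ a b, b ≤ Gg F u c a → D2 H a b - Vv u c b ≤ 0 := by
    intro a b hb
    rcases eq_or_lt_of_le hb with he | hlt
    · rw [he, hφg a]
    by_contra hneg
    push_neg at hneg
    have hquot : 0 ≤ (C₁ + C₂ + 1) / ρ := by positivity
    have hBb : min b (a - (C₁ + C₂ + 1) / ρ) ≤ b := min_le_left _ _
    have hBa : min b (a - (C₁ + C₂ + 1) / ρ) ≤ a :=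
      le_trans (min_le_right _ _) (by linarith)
    have hφB : D2 H a (min b (a - (C₁ + C₂ + 1) / ρ))
        - Vv u c (min b (a - (C₁ + C₂ + 1) / ρ)) < 0 := by
      have h5 := hφupper a _ hBa
      have h6 : (C₁ + C₂ + 1) / ρ ≤ a - min b (a - (C₁ + C₂ + 1) / ρ) := by
        have := min_le_right b (a - (C₁ + C₂ + 1) / ρ); linarith
      have h7 : C₁ + C₂ + 1 ≤ ρ * (a - min b (a - (C₁ + C₂ + 1) / ρ)) := by
        rw [mul_comm]
        exact (div_le_iff₀ hρ).1 h6
      linarith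
    obtain ⟨z, hz, hz0⟩ := intermediate_value_Icc hBb ((hφcont a).continuousOn)
      (Set.mem_Icc.2 ⟨hφB.le, hneg.le⟩)
    have hzg := hφzero a z hz0
    have := hz.2
    rw [hzg] at this
    linarith
  -- derivative of Hh in the second variable
  have hhb : ∀ a t, HasDerivAt (fun s => Hh H u c a s) (D2 H a t - Vv u c t) t := by
    intro a t
    have h1 : HasDerivAt (fun s => H a s) (D2 H a t) t := by
      have := hasDerivAt_snd hH a t
      rwa [← D2_eq hH] at this
    have h2 : HasDerivAt u (deriv u t) t := (hudiff t).hasDerivAt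
    have h3 : HasDerivAt (fun s : ℝ => c * (a - s)) (-c) t := by
      simpa using ((hasDerivAt_const t a).sub (hasDerivAt_id t)).const_mul c
    have h4 := ((h1.add_const (u a)).sub h2).add h3
    have h5 : D2 H a t - deriv u t + -c = D2 H a t - Vv u c t := by
      simp [Vv]; ring
    rw [h5] at h4
    exact h4.congr_deriv rfl
  -- derivative of Hh in the first variable
  have hha : ∀ b t, HasDerivAt (fun s => Hh H u c s b) (D1 H t b + Vv u c t) t := by
    intro b t
    have h1 : HasDerivAt (fun s => H s b) (D1 H t b) t := by
      have := hasDerivAt_fst hH t b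
      rwa [← D1_eq hH] at this
    have h2 : HasDerivAt u (deriv u t) t := (hudiff t).hasDerivAt
    have h3 : HasDerivAt (fun s : ℝ => c * (s - b)) c t := by
      simpa using ((hasDerivAt_id t).sub (hasDerivAt_const t b)).const_mul c
    have h4 := (((h1.add h2).sub_const (u b))).add h3
    have h5 : D1 H t b + deriv u t + c = D1 H t b + Vv u c t := by
      simp [Vv]; ring
    rw [h5] at h4
    exact h4
  -- minimization in the second variable
  have hmin : ∀ a b, Mm H F u c a ≤ Hh H u c a b := by
    intro a b
    rcases le_total (Gg F u c a) b with hab | hab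
    · have hmono : MonotoneOn (fun s => Hh H u c a s) (Set.Icc (Gg F u c a) b) := by
        apply monotoneOn_of_deriv_nonneg (convex_Icc _ _)
        · exact fun t _ => ((hhb a t).continuousAt).continuousWithinAt
        · exact fun t _ => ((hhb a t).differentiableAt).differentiableWithinAt
        · intro t ht
          rw [interior_Icc] at ht
          rw [(hhb a t).deriv]
          exact hφpos a t ht.1.le
      exact hmono (Set.left_mem_Icc.2 hab) (Set.right_mem_Icc.2 hab) hab
    · have hanti : AntitoneOn (fun s => Hh H u c a s) (Set.Icc b (Gg F u c a)) := by
        apply antitoneOn_of_deriv_nonpos (convex_Icc _ _)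
        · exact fun t _ => ((hhb a t).continuousAt).continuousWithinAt
        · exact fun t _ => ((hhb a t).differentiableAt).differentiableWithinAt
        · intro t ht
          rw [interior_Icc] at ht
          rw [(hhb a t).deriv]
          exact hφneg a t ht.2.le
      exact hanti (Set.left_mem_Icc.2 hab) (Set.right_mem_Icc.2 hab) hab
  -- Mm has zero derivative everywhere
  have hm0 : ∀ s, HasDerivAt (Mm H F u c) 0 s := by
    intro s
    rw [hasDerivAt_iff_isLittleO, Asymptotics.isLittleO_iff]
    intro ε hε
    obtain ⟨δ₀, hδ₀pos, hδ₀⟩ := Metric.continuousAt_iff.1 (hu'cont.continuousAt (x := s))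
      (ε / 4) (by linarith)
    obtain ⟨δ, hδpos, hδ₁, hδ₂⟩ : ∃ δ, 0 < δ ∧ δ ≤ δ₀ ∧ δ ≤ ε / (4 * (M + 1)) :=
      ⟨min δ₀ (ε / (4 * (M + 1))), lt_min hδ₀pos (by positivity), min_le_left _ _,
        min_le_right _ _⟩
    -- Lipschitz bound for D1 in the first variable
    have hD1lip : ∀ b s' t : ℝ, |D1 H t b - D1 H s' b| ≤ M * |t - s'| := by
      intro b s' t
      exact abs_sub_le_of_hasDerivAt_le s' t (fun r _ => hasDerivAt_D1_fst hH r b)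
        (fun r _ => (hbound r b).1)
    -- main estimate
    have hEst : ∀ w s' : ℝ, |w - s| < δ → |s' - s| < δ →
        |Hh H u c s' (Gg F u c w) - Hh H u c s (Gg F u c w)| ≤ ε * |s' - s| := by
      intro w s' hw hs'
      apply abs_sub_le_of_hasDerivAt_le s s'
        (g := fun t => D1 H t (Gg F u c w) + Vv u c t)
      · intro t _
        exact hha (Gg F u c w) t
      · intro t ht
        have htb : |t - s| ≤ |s' - s| := abs_sub_le_of_mem_uIcc ht
        have htδ : |t - s| < δ := lt_of_le_of_lt htb hs'
        have hzero : D1 H w (Gg F u c w) + Vv u c w = 0 := by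
          have := (hkey w).1
          linarith
        have hsplit : D1 H t (Gg F u c w) + Vv u c t
            = (D1 H t (Gg F u c w) - D1 H w (Gg F u c w))
              + (deriv u t - deriv u w) := by
          simp only [Vv] at hzero ⊢
          linarith
        rw [hsplit]
        have hb1 : |D1 H t (Gg F u c w) - D1 H w (Gg F u c w)| ≤ M * |t - w| :=
          hD1lip _ w t
        have htw : |t - w| ≤ |t - s| + |s - w| := abs_sub_le t s w
        have hsw : |s - w| < δ := by rwa [abs_sub_comm]
        have htw2 : |t - w| < 2 * δ := by linarith
        have hb1' : M * |t - w| ≤ ε / 2 := by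
          have hM1 : (0:ℝ) < M + 1 := by linarith
          have hkey2 : ε / (4 * (M + 1)) * (4 * (M + 1)) = ε :=
            div_mul_cancel₀ ε (by positivity)
          have hd0 : (0:ℝ) ≤ ε / (4 * (M + 1)) := by positivity
          have h9 : M * |t - w| ≤ M * (2 * (ε / (4 * (M + 1)))) := by
            apply mul_le_mul_of_nonneg_left _ hM.le
            linarith
          nlinarith [h9, hkey2, hd0]
        have hb2 : |deriv u t - deriv u w| ≤ ε / 2 := by
          have ht4 : dist (deriv u t) (deriv u s) < ε / 4 := by
            apply hδ₀
            rw [Real.dist_eq]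
            exact lt_of_lt_of_le htδ hδ₁
          have hw4 : dist (deriv u w) (deriv u s) < ε / 4 := by
            apply hδ₀
            rw [Real.dist_eq]
            exact lt_of_lt_of_le hw hδ₁
          have := abs_sub_le (deriv u t) (deriv u s) (deriv u w)
          rw [Real.dist_eq] at ht4 hw4
          rw [abs_sub_comm (deriv u s) (deriv u w)] at this
          linarith
        calc |(D1 H t (Gg F u c w) - D1 H w (Gg F u c w)) + (deriv u t - deriv u w)|
            ≤ |D1 H t (Gg F u c w) - D1 H w (Gg F u c w)| + |deriv u t - deriv u w| :=
              abs_add_le _ _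
          _ ≤ ε / 2 + ε / 2 := add_le_add (le_trans hb1 hb1') hb2
          _ = ε := by ring
    filter_upwards [Metric.ball_mem_nhds s hδpos] with s' hs'
    rw [Metric.mem_ball, Real.dist_eq] at hs'
    have h1 : Mm H F u c s' - Mm H F u c s ≤ ε * |s' - s| := by
      have hle : Mm H F u c s' ≤ Hh H u c s' (Gg F u c s) := hmin s' (Gg F u c s)
      have heq : Mm H F u c s = Hh H u c s (Gg F u c s) := rfl
      have habs := hEst s s' (by simpa using hδpos) hs'
      have := le_abs_self (Hh H u c s' (Gg F u c s) - Hh H u c s (Gg F u c s))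
      linarith
    have h2 : Mm H F u c s - Mm H F u c s' ≤ ε * |s' - s| := by
      have hle : Mm H F u c s ≤ Hh H u c s (Gg F u c s') := hmin s (Gg F u c s')
      have heq : Mm H F u c s' = Hh H u c s' (Gg F u c s') := rfl
      have habs := hEst s' s' hs' hs'
      have habs2 := hEst s' s' hs' hs'
      -- need |Hh s (Gg s') - Hh s' (Gg s')|
      have habs3 := hEst s' s' hs' hs'
      have hEst2 := hEst s' s' hs' hs'
      -- use hEst with w := s', s' := s'... we need evaluation at s and s'
      have h5 := hEst s' s' hs' hs'
      have h6 : |Hh H u c s' (Gg F u c s') - Hh H u c s (Gg F u c s')| ≤ ε * |s' - s| :=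
        hEst s' s' hs' hs'
      have := neg_abs_le (Hh H u c s' (Gg F u c s') - Hh H u c s (Gg F u c s'))
      linarith
    rw [smul_zero, sub_zero, Real.norm_eq_abs, Real.norm_eq_abs]
    rw [abs_sub_le_iff]
    exact ⟨h1, h2⟩
  have hmdiff : Differentiable ℝ (Mm H F u c) := fun t => (hm0 t).differentiableAt
  have hmconst : ∀ a b, Mm H F u c a = Mm H F u c b := fun a b =>
    is_const_of_deriv_eq_zero hmdiff (fun t => (hm0 t).deriv) a b
  -- the orbit
  have horb : ∀ k, F^[k] (x₀, c + deriv u x₀) = (x k, Vv u c (x k)) := by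
    intro k
    induction k with
    | zero =>
      have h0 : x 0 = x₀ := by rw [hx 0]; simp
      rw [Function.iterate_zero_apply, h0]
      rfl
    | succ k ih =>
      have hg2 := hgraph (x k)
      have hstep : x (k + 1) = Gg F u c (x k) := by
        rw [hx (k + 1), Function.iterate_succ_apply', ih]
        rfl
      rw [Function.iterate_succ_apply', ih]
      show F (x k, Vv u c (x k)) = _
      rw [hg2, hstep]
  have hstep : ∀ k, x (k + 1) = Gg F u c (x k) := by
    intro k
    rw [hx (k + 1), Function.iterate_succ_apply', horb k]
    rfl
  have hx0 : x 0 = x₀ := by rw [hx 0]; simp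
  have hxq : x q = x₀ + p := by
    rw [hx q, hperiodic x₀]
  -- telescoping identity
  have hsum : ∀ z : ℕ → ℝ,
      ∑ k ∈ Finset.range q, Hh H u c (z k) (z (k + 1))
        = ∑ k ∈ Finset.range q, H (z k) (z (k + 1))
          + ((u (z 0) + c * z 0) - (u (z q) + c * z q)) := by
    intro z
    have h1 : ∀ k, Hh H u c (z k) (z (k + 1))
        = H (z k) (z (k + 1)) + ((u (z k) + c * z k) - (u (z (k + 1)) + c * z (k + 1))) := by
      intro k
      simp only [Hh]; ring
    rw [Finset.sum_congr rfl (fun k _ => h1 k), Finset.sum_add_distrib,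
      Finset.sum_range_sub' (fun k => u (z k) + c * z k)]
  -- main comparison
  have hkey2 : ∑ k ∈ Finset.range q, Hh H u c (x k) (x (k + 1))
      ≤ ∑ k ∈ Finset.range q, Hh H u c (y k) (y (k + 1)) := by
    calc ∑ k ∈ Finset.range q, Hh H u c (x k) (x (k + 1))
        = ∑ k ∈ Finset.range q, Mm H F u c (x k) := by
          apply Finset.sum_congr rfl
          intro k _
          rw [hstep k]
          rfl
      _ = ∑ k ∈ Finset.range q, Mm H F u c (y k) := by
          exact Finset.sum_congr rfl (fun k _ => hmconst _ _)
      _ ≤ ∑ k ∈ Finset.range q, Hh H u c (y k) (y (k + 1)) :=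
          Finset.sum_le_sum (fun k _ => hmin (y k) (y (k + 1)))
  have e1 := hsum x
  have e2 := hsum y
  rw [hx0, hxq] at e1
  rw [hy0, hyq] at e2
  linarith
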